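/- arXiv:1012.5428 — 3 statements merged into one kernel-verified Lean document; each statement's English description precedes it below -/
import Mathlib

section
/- There exists a constant a₆>0, depending only on s and f, such that for every β∈(0,1], every integer m≥1, and every critical point u of the restriction of I_β to the finite-dimensional space E^{+m}⊕E^{−m}⊕N^m (i.e., the derivative of this restriction vanishes at u), one has ∫_Q |u|^{s+1} dx dt ≤ a₆(I_β(u)²+1). -/
open MeasureTheory

noncomputable section

/-- The space-time domain `Q = (0,π) × (0,2π)`. -/
def Qset : Set (ℝ × ℝ) := Set.Ioo 0 Real.pi ×ˢ Set.Ioo 0 (2 * Real.pi)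

/-- Basis function `sin(jx)·cos(kt)`. -/
def phiA (j k : ℕ) : ℝ × ℝ → ℝ := fun p => Real.sin (j * p.1) * Real.cos (k * p.2)

/-- Basis function `sin(jx)·sin(kt)`. -/
def phiB (j k : ℕ) : ℝ × ℝ → ℝ := fun p => Real.sin (j * p.1) * Real.sin (k * p.2)

/-- The (normalized) Fourier coefficient of `u` against `sin(jx)cos(kt)`. -/
def coefA (j k : ℕ) (u : ℝ × ℝ → ℝ) : ℝ :=
  ((if k = 0 then 1 else 2) / Real.pi ^ 2) * ∫ p in Qset, u p * phiA j k p

/-- The (normalized) Fourier coefficient of `u` against `sin(jx)sin(kt)`. -/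
def coefB (j k : ℕ) (u : ℝ × ℝ → ℝ) : ℝ :=
  (2 / Real.pi ^ 2) * ∫ p in Qset, u p * phiB j k p

/-- `‖w⁺‖_E²`, the square of the `E`-norm of the `E⁺` (i.e. `k > j`) component of `u`. -/
def normPlusSq (u : ℝ × ℝ → ℝ) : ℝ :=
  Real.pi ^ 2 * ∑' jk : ℕ × ℕ,
    if jk.1 < jk.2 then
      |((jk.2 : ℝ) ^ 2 - (jk.1 : ℝ) ^ 2)| * ((coefA jk.1 jk.2 u) ^ 2 + (coefB jk.1 jk.2 u) ^ 2)
    else 0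

/-- `‖w⁻‖_E²`, the square of the `E`-norm of the `E⁻` (i.e. `k < j`) component of `u`. -/
def normMinusSq (u : ℝ × ℝ → ℝ) : ℝ :=
  Real.pi ^ 2 * ∑' jk : ℕ × ℕ,
    if jk.2 < jk.1 then
      |((jk.2 : ℝ) ^ 2 - (jk.1 : ℝ) ^ 2)| * ((coefA jk.1 jk.2 u) ^ 2 + (coefB jk.1 jk.2 u) ^ 2)
    else 0

/-- `‖w‖_E²`, the square of the full `E`-norm (over all `k ≠ j`). -/
def normESq (u : ℝ × ℝ → ℝ) : ℝ := normPlusSq u + normMinusSq u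

/-- `‖v_t‖²_{L²(Q)}`, where `v` is the kernel (`k = j`) component of `u`. -/
def vtNormSq (u : ℝ × ℝ → ℝ) : ℝ :=
  (Real.pi ^ 2 / 2) * ∑' j : ℕ, (j : ℝ) ^ 2 * ((coefA j j u) ^ 2 + (coefB j j u) ^ 2)

/-- `‖u‖_{β,E}² = ‖w⁺‖_E² + ‖w⁻‖_E² + β‖v_t‖²_{L²}`. -/
def normBetaSq (β : ℝ) (u : ℝ × ℝ → ℝ) : ℝ := normPlusSq u + normMinusSq u + β * vtNormSq u

/-- `‖u‖_{β,E}`. -/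
def normBeta (β : ℝ) (u : ℝ × ℝ → ℝ) : ℝ := Real.sqrt (normBetaSq β u)

/-- `∫_Q |u|^r dx dt`. -/
def intPow (r : ℝ) (u : ℝ × ℝ → ℝ) : ℝ := ∫ p in Qset, |u p| ^ r

/-- `∫_Q f·u dx dt`. -/
def intFU (f u : ℝ × ℝ → ℝ) : ℝ := ∫ p in Qset, f p * u p

/-- The functional `I_β`. -/
def Ibeta (s : ℝ) (f : ℝ × ℝ → ℝ) (β : ℝ) (u : ℝ × ℝ → ℝ) : ℝ :=
  (1 / 2) * (normPlusSq u - normMinusSq u - β * vtNormSq u)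
    - (1 / (s + 1)) * intPow (s + 1) u - intFU f u

/-- `𝓘_β(u) = 2a₆(I_β(u)² + 1)`. -/
def calI (s : ℝ) (f : ℝ × ℝ → ℝ) (a6 β : ℝ) (u : ℝ × ℝ → ℝ) : ℝ :=
  2 * a6 * ((Ibeta s f β u) ^ 2 + 1)

/-- The cutoff `ψ(u) = χ(𝓘_β(u)⁻¹·(1/(s+1))∫_Q|u|^{s+1})`. -/
def psiCut (s : ℝ) (f : ℝ × ℝ → ℝ) (a6 : ℝ) (χ : ℝ → ℝ) (β : ℝ) (u : ℝ × ℝ → ℝ) : ℝ :=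
  χ ((calI s f a6 β u)⁻¹ * ((1 / (s + 1)) * intPow (s + 1) u))

/-- The truncated functional `J_β`. -/
def Jbeta (s : ℝ) (f : ℝ × ℝ → ℝ) (a6 : ℝ) (χ : ℝ → ℝ) (β : ℝ) (u : ℝ × ℝ → ℝ) : ℝ :=
  (1 / 2) * (normPlusSq u - normMinusSq u - β * vtNormSq u)
    - (1 / (s + 1)) * intPow (s + 1) u - psiCut s f a6 χ β u * intFU f u

/-- Indices `(j, k, A/B)` of the eigenfunctions with positive eigenvalue: `1 ≤ j < k`. -/
def IdxSet : Set (ℕ × ℕ × Bool) := {i | 1 ≤ i.1 ∧ i.1 < i.2.1}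

/-- The eigenfunction corresponding to an index. -/
def idxFun (i : ℕ × ℕ × Bool) : ℝ × ℝ → ℝ := if i.2.2 then phiA i.1 i.2.1 else phiB i.1 i.2.1

/-- The eigenvalue `k² - j²` of an index. -/
def eigenval (i : ℕ × ℕ × Bool) : ℝ := (i.2.1 : ℝ) ^ 2 - (i.1 : ℝ) ^ 2

/-- `e` (0-indexed: `e_{l+1} = idxFun (e l)`) enumerates the positive-eigenvalue
eigenfunctions in nondecreasing order of `k² - j²`. -/
def IsEnum (e : ℕ → ℕ × ℕ × Bool) : Prop :=
  Function.Injective e ∧ Set.range e = IdxSet ∧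
    ∀ l l' : ℕ, l ≤ l' → eigenval (e l) ≤ eigenval (e l')

/-- `E^{+n} = span{e₁, …, e_n}`. -/
def Eplus (e : ℕ → ℕ × ℕ × Bool) (n : ℕ) : Submodule ℝ (ℝ × ℝ → ℝ) :=
  Submodule.span ℝ (idxFun '' (e '' {l | l < n}))

/-- `E^{-m} = span{sin(jx)cos(kt), sin(jx)sin(kt) : j + k ≤ m, 0 ≤ k < j}`. -/
def Eminus (m : ℕ) : Submodule ℝ (ℝ × ℝ → ℝ) :=
  Submodule.span ℝ {g | ∃ j k : ℕ, j + k ≤ m ∧ k < j ∧ (g = phiA j k ∨ g = phiB j k)}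

/-- `N^m = span{sin(jx)cos(jt), sin(jx)sin(jt) : 1 ≤ j ≤ m}`. -/
def Nspace (m : ℕ) : Submodule ℝ (ℝ × ℝ → ℝ) :=
  Submodule.span ℝ {g | ∃ j : ℕ, 1 ≤ j ∧ j ≤ m ∧ (g = phiA j j ∨ g = phiB j j)}

/-- `E^{+n} ⊕ E^{-m} ⊕ N^m`. -/
def Wnm (e : ℕ → ℕ × ℕ × Bool) (n m : ℕ) : Submodule ℝ (ℝ × ℝ → ℝ) :=
  Eplus e n ⊔ Eminus m ⊔ Nspace m

/-- `f` is `C²`, `2π`-periodic in `t`, and vanishes at `x = 0` and `x = π`. -/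
def fAdmissible (f : ℝ × ℝ → ℝ) : Prop :=
  ContDiff ℝ 2 f ∧ (∀ x t : ℝ, f (x, t + 2 * Real.pi) = f (x, t)) ∧
    ∀ t : ℝ, f (0, t) = 0 ∧ f (Real.pi, t) = 0

/-- The cutoff function `χ`: smooth, `χ = 1` on `(-∞,1]`, `χ = 0` on `[2,∞)`,
and `-2 < χ' < 0` on `(1,2)`. -/
def chiAdmissible (χ : ℝ → ℝ) : Prop :=
  ContDiff ℝ (⊤ : ℕ∞) χ ∧ (∀ t : ℝ, t ≤ 1 → χ t = 1) ∧ (∀ t : ℝ, 2 ≤ t → χ t = 0) ∧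
    ∀ t : ℝ, 1 < t → t < 2 → -2 < deriv χ t ∧ deriv χ t < 0

/-! ### Auxiliary lemmas -/

lemma coefA_scale (j k : ℕ) (c : ℝ) (u : ℝ × ℝ → ℝ) :
    coefA j k (fun p => c * u p) = c * coefA j k u := by
  unfold coefA
  have : (∫ p in Qset, (c * u p) * phiA j k p) = c * ∫ p in Qset, u p * phiA j k p := by
    simp_rw [mul_assoc]; exact MeasureTheory.integral_const_mul c _
  rw [this]; ring

lemma coefB_scale (j k : ℕ) (c : ℝ) (u : ℝ × ℝ → ℝ) :
    coefB j k (fun p => c * u p) = c * coefB j k u := by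
  unfold coefB
  have : (∫ p in Qset, (c * u p) * phiB j k p) = c * ∫ p in Qset, u p * phiB j k p := by
    simp_rw [mul_assoc]; exact MeasureTheory.integral_const_mul c _
  rw [this]; ring

lemma normPlusSq_scale (c : ℝ) (u : ℝ × ℝ → ℝ) :
    normPlusSq (fun p => c * u p) = c ^ 2 * normPlusSq u := by
  unfold normPlusSq
  have h : ∀ jk : ℕ × ℕ,
      (if jk.1 < jk.2 then
        |((jk.2 : ℝ) ^ 2 - (jk.1 : ℝ) ^ 2)| *
          ((coefA jk.1 jk.2 (fun p => c * u p)) ^ 2 + (coefB jk.1 jk.2 (fun p => c * u p)) ^ 2)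
      else 0)
      = c ^ 2 * (if jk.1 < jk.2 then
        |((jk.2 : ℝ) ^ 2 - (jk.1 : ℝ) ^ 2)| *
          ((coefA jk.1 jk.2 u) ^ 2 + (coefB jk.1 jk.2 u) ^ 2) else 0) := by
    intro jk; rw [coefA_scale, coefB_scale]; split <;> ring
  rw [tsum_congr h, tsum_mul_left]; ring

lemma normMinusSq_scale (c : ℝ) (u : ℝ × ℝ → ℝ) :
    normMinusSq (fun p => c * u p) = c ^ 2 * normMinusSq u := by
  unfold normMinusSq
  have h : ∀ jk : ℕ × ℕ,
      (if jk.2 < jk.1 then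
        |((jk.2 : ℝ) ^ 2 - (jk.1 : ℝ) ^ 2)| *
          ((coefA jk.1 jk.2 (fun p => c * u p)) ^ 2 + (coefB jk.1 jk.2 (fun p => c * u p)) ^ 2)
      else 0)
      = c ^ 2 * (if jk.2 < jk.1 then
        |((jk.2 : ℝ) ^ 2 - (jk.1 : ℝ) ^ 2)| *
          ((coefA jk.1 jk.2 u) ^ 2 + (coefB jk.1 jk.2 u) ^ 2) else 0) := by
    intro jk; rw [coefA_scale, coefB_scale]; split <;> ring
  rw [tsum_congr h, tsum_mul_left]; ring

lemma vtNormSq_scale (c : ℝ) (u : ℝ × ℝ → ℝ) :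
    vtNormSq (fun p => c * u p) = c ^ 2 * vtNormSq u := by
  unfold vtNormSq
  have h : ∀ j : ℕ,
      (j : ℝ) ^ 2 * ((coefA j j (fun p => c * u p)) ^ 2 + (coefB j j (fun p => c * u p)) ^ 2)
      = c ^ 2 * ((j : ℝ) ^ 2 * ((coefA j j u) ^ 2 + (coefB j j u) ^ 2)) := by
    intro j; rw [coefA_scale, coefB_scale]; ring
  rw [tsum_congr h, tsum_mul_left]; ring

lemma intPow_scale (r c : ℝ) (u : ℝ × ℝ → ℝ) :
    intPow r (fun p => c * u p) = |c| ^ r * intPow r u := by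
  unfold intPow
  simp_rw [abs_mul, Real.mul_rpow (abs_nonneg c) (abs_nonneg _)]
  exact MeasureTheory.integral_const_mul _ _

lemma intFU_scale (f : ℝ × ℝ → ℝ) (c : ℝ) (u : ℝ × ℝ → ℝ) :
    intFU f (fun p => c * u p) = c * intFU f u := by
  unfold intFU
  simp_rw [show ∀ p : ℝ × ℝ, f p * (c * u p) = c * (f p * u p) by intro p; ring]
  exact MeasureTheory.integral_const_mul c _

lemma Ibeta_scale (s : ℝ) (f : ℝ × ℝ → ℝ) (β c : ℝ) (u : ℝ × ℝ → ℝ) :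
    Ibeta s f β (fun p => c * u p)
      = c ^ 2 * ((1 / 2) * (normPlusSq u - normMinusSq u - β * vtNormSq u))
        - |c| ^ (s + 1) * ((1 / (s + 1)) * intPow (s + 1) u)
        - c * intFU f u := by
  unfold Ibeta
  rw [normPlusSq_scale, normMinusSq_scale, vtNormSq_scale, intPow_scale, intFU_scale]
  ring

/-- The submodule of continuous functions. -/
def contSub : Submodule ℝ (ℝ × ℝ → ℝ) where
  carrier := {g | Continuous g}
  add_mem' := fun hg hh => hg.add hh
  zero_mem' := continuous_const
  smul_mem' := fun c g hg => hg.const_smul c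

lemma phiA_continuous (j k : ℕ) : Continuous (phiA j k) := by
  unfold phiA; fun_prop

lemma phiB_continuous (j k : ℕ) : Continuous (phiB j k) := by
  unfold phiB; fun_prop

lemma mem_Wnm_continuous {e : ℕ → ℕ × ℕ × Bool} {n m : ℕ} {u : ℝ × ℝ → ℝ}
    (hu : u ∈ Wnm e n m) : Continuous u := by
  have h : Wnm e n m ≤ contSub := by
    unfold Wnm Eplus Eminus Nspace
    refine sup_le (sup_le ?_ ?_) ?_ <;> rw [Submodule.span_le] <;> intro g hg
    · obtain ⟨i, _, rfl⟩ := hg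
      unfold idxFun
      split
      · exact phiA_continuous _ _
      · exact phiB_continuous _ _
    · obtain ⟨j, k, _, _, hg | hg⟩ := hg <;> subst hg
      · exact phiA_continuous _ _
      · exact phiB_continuous _ _
    · obtain ⟨j, _, _, hg | hg⟩ := hg <;> subst hg
      · exact phiA_continuous _ _
      · exact phiB_continuous _ _
  exact h hu

/-- The compact closure of `Q`. -/
def Kset : Set (ℝ × ℝ) := Set.Icc 0 Real.pi ×ˢ Set.Icc 0 (2 * Real.pi)

lemma Kset_compact : IsCompact Kset := isCompact_Icc.prod isCompact_Icc

lemma Qset_subset_Kset : Qset ⊆ Kset :=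
  Set.prod_mono Set.Ioo_subset_Icc_self Set.Ioo_subset_Icc_self

lemma integrableOn_Qset_of_continuous {g : ℝ × ℝ → ℝ} (hg : Continuous g) :
    IntegrableOn g Qset := by
  exact (hg.continuousOn.integrableOn_compact Kset_compact).mono_set Qset_subset_Kset

set_option maxHeartbeats 1000000 in
/-- a priori `L^{s+1}` bound at critical points of `I_β` restricted to
`E^{+m} ⊕ E^{-m} ⊕ N^m`, uniform in `β ∈ (0,1]` and `m`. -/
theorem statement4 (s : ℝ) (hs : 1 < s) (f : ℝ × ℝ → ℝ) (hf : fAdmissible f)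
    (e : ℕ → ℕ × ℕ × Bool) (he : IsEnum e) :
    ∃ a6 : ℝ, 0 < a6 ∧ ∀ β ∈ Set.Ioc (0 : ℝ) 1, ∀ m : ℕ, 1 ≤ m →
      ∀ u ∈ Wnm e m m,
        (∀ φ ∈ Wnm e m m, deriv (fun τ : ℝ => Ibeta s f β (u + τ • φ)) 0 = 0) →
        intPow (s + 1) u ≤ a6 * ((Ibeta s f β u) ^ 2 + 1) := by
  classical
  obtain ⟨M, hM⟩ := Kset_compact.exists_bound_of_continuousOn (hf.1.continuous.continuousOn)
  have hs0 : (0:ℝ) < s := by linarith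
  have hs1 : (0:ℝ) < s - 1 := by linarith
  have hsp : (0:ℝ) < s + 1 := by linarith
  set M₁ : ℝ := max M 1 with hM₁def
  have hM₁pos : (0:ℝ) < M₁ := lt_of_lt_of_le one_pos (le_max_right _ _)
  have hfb : ∀ p ∈ Qset, |f p| ≤ M₁ := by
    intro p hp
    have := hM p (Qset_subset_Kset hp)
    rw [Real.norm_eq_abs] at this
    exact this.trans (le_max_left _ _)
  clear_value M₁
  set κ : ℝ := (s + 1) / (s - 1) with hκdef
  have hκ : 0 < κ := div_pos hsp hs1
  clear_value κ
  set R : ℝ := (2 * κ * M₁) ^ (1/s) with hRdef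
  have hRpos : 0 < R := Real.rpow_pos_of_pos (by positivity) _
  have hRs : R ^ s = 2 * κ * M₁ := by
    rw [hRdef, ← Real.rpow_mul (by positivity), one_div, inv_mul_cancel₀ (ne_of_gt hs0),
      Real.rpow_one]
  clear_value R
  set vol : ℝ := (volume Qset).toReal with hvoldef
  have hvol : 0 ≤ vol := ENNReal.toReal_nonneg
  clear_value vol
  refine ⟨2 * κ * (1 + M₁ * R * vol), by positivity, ?_⟩
  intro β hβ m hm u hu hcrit
  have hucont : Continuous u := mem_Wnm_continuous hu
  set P : ℝ := intPow (s + 1) u with hPdef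
  set C : ℝ := intFU f u with hCdef
  set A : ℝ := (1 / 2) * (normPlusSq u - normMinusSq u - β * vtNormSq u) with hAdef
  have hI : Ibeta s f β u = A - (1/(s+1)) * P - C := rfl
  clear_value P C A
  have hP0 : 0 ≤ P := by
    rw [hPdef, intPow]
    exact integral_nonneg fun p => Real.rpow_nonneg (abs_nonneg _) _
  -- Euler equation from the critical point condition in direction u
  have heq : 2 * A - P - C = 0 := by
    have h0 := hcrit u hu
    have hfun : ∀ τ : ℝ, u + τ • u = fun p => (1 + τ) * u p := by
      intro τ; funext p
      simp only [Pi.add_apply, Pi.smul_apply, smul_eq_mul]; ring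
    have hEq : (fun τ : ℝ => (1+τ)^2 * A - (1+τ)^(s+1) * ((1/(s+1)) * P) - (1+τ) * C)
        =ᶠ[nhds (0:ℝ)] (fun τ : ℝ => Ibeta s f β (u + τ • u)) := by
      have hmem : Set.Ioo (-1:ℝ) 1 ∈ nhds (0:ℝ) := Ioo_mem_nhds (by norm_num) (by norm_num)
      filter_upwards [hmem] with τ hτ
      rw [hfun τ, Ibeta_scale, abs_of_pos (by linarith [hτ.1] : (0:ℝ) < 1 + τ),
        hAdef, hPdef, hCdef]
    have hder : HasDerivAt
        (fun τ : ℝ => (1+τ)^2 * A - (1+τ)^(s+1) * ((1/(s+1)) * P) - (1+τ) * C)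
        (2 * A - P - C) 0 := by
      have h1 : HasDerivAt (fun τ : ℝ => 1 + τ) 1 0 := (hasDerivAt_id 0).const_add 1
      have h2 := (h1.pow 2).mul_const A
      have h3 := (h1.rpow_const (p := s + 1)
        (Or.inl (by norm_num : (1:ℝ) + 0 ≠ 0))).mul_const ((1/(s+1)) * P)
      have h4 := h1.mul_const C
      convert (h2.sub h3).sub h4 using 1
      case e'_4 => rfl
      case e'_5 => rfl
      case e'_8 => rfl
      have : ((1:ℝ) + 0) ^ (s + 1 - 1) = 1 := by
        rw [show (1:ℝ) + 0 = 1 by norm_num, Real.one_rpow]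
      rw [this]
      push_cast
      field_simp
      ring
    rw [← hEq.deriv_eq, hder.deriv] at h0
    exact h0
  -- key algebraic identity
  have key : P = κ * (2 * Ibeta s f β u + C) := by
    rw [hI, hκdef]
    have hA : A = (P + C) / 2 := by linarith
    rw [hA]
    field_simp
    ring
  -- pointwise Young-type bound
  have hpt : ∀ y : ℝ, 0 ≤ y → y ≤ R + y ^ (s+1) / R ^ s := by
    intro y hy
    rcases le_or_gt y R with h | h
    · have : 0 ≤ y ^ (s+1) / R ^ s :=
        div_nonneg (Real.rpow_nonneg hy _) (Real.rpow_nonneg hRpos.le _)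
      linarith
    · have hy0 : 0 < y := lt_trans hRpos h
      have h6 : R ^ s ≤ y ^ s := Real.rpow_le_rpow hRpos.le h.le (by linarith)
      have h7 : y ^ (s+1) = y ^ s * y := by rw [Real.rpow_add hy0, Real.rpow_one]
      have hRspos : (0:ℝ) < R ^ s := Real.rpow_pos_of_pos hRpos s
      have h8 : y ≤ y ^ (s+1) / R ^ s := by
        rw [le_div_iff₀ hRspos, h7]
        nlinarith
      linarith
  -- bound on the forcing term
  have hCb : |C| ≤ M₁ * R * vol + (M₁ / R ^ s) * P := by
    have h1 : |C| ≤ ∫ p in Qset, |f p| * |u p| := by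
      rw [hCdef, intFU]
      have := norm_integral_le_integral_norm (μ := volume.restrict Qset)
        (fun p => f p * u p)
      simpa [Real.norm_eq_abs] using this
    have hint1 : IntegrableOn (fun p : ℝ × ℝ => |f p| * |u p|) Qset :=
      integrableOn_Qset_of_continuous (hf.1.continuous.abs.mul hucont.abs)
    have hcontpow : Continuous (fun p : ℝ × ℝ => |u p| ^ (s+1)) :=
      Continuous.rpow_const hucont.abs (fun p => Or.inr (by linarith))
    have hint2 : IntegrableOn (fun p : ℝ × ℝ => M₁ * R + (M₁ / R ^ s) * |u p| ^ (s+1)) Qset :=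
      integrableOn_Qset_of_continuous (by fun_prop)
    have h2 : ∫ p in Qset, |f p| * |u p|
        ≤ ∫ p in Qset, (M₁ * R + (M₁ / R ^ s) * |u p| ^ (s+1)) := by
      apply setIntegral_mono_on hint1 hint2 (measurableSet_Ioo.prod measurableSet_Ioo)
      intro p hp
      have h3 : |u p| ≤ R + |u p| ^ (s+1) / R ^ s := hpt _ (abs_nonneg _)
      calc |f p| * |u p| ≤ M₁ * |u p| :=
            mul_le_mul_of_nonneg_right (hfb p hp) (abs_nonneg _)
        _ ≤ M₁ * (R + |u p| ^ (s+1) / R ^ s) := mul_le_mul_of_nonneg_left h3 hM₁pos.le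
        _ = M₁ * R + (M₁ / R ^ s) * |u p| ^ (s+1) := by ring
    have h4 : ∫ p in Qset, (M₁ * R + (M₁ / R ^ s) * |u p| ^ (s+1))
        = M₁ * R * vol + (M₁ / R ^ s) * P := by
      rw [integral_add (integrableOn_Qset_of_continuous continuous_const)
        (integrableOn_Qset_of_continuous (by fun_prop)),
        setIntegral_const, MeasureTheory.integral_const_mul]
      rw [hPdef, intPow, hvoldef, smul_eq_mul, measureReal_def]
      ring
    linarith
  -- conclusion
  have hhalf : (M₁ / R ^ s) = 1 / (2 * κ) := by
    rw [hRs]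
    field_simp
  rw [hhalf] at hCb
  set I : ℝ := Ibeta s f β u with hIdef
  clear_value I
  have habs : 2 * I + C ≤ 2 * |I| + |C| := by
    have := le_abs_self I
    have := le_abs_self C
    linarith
  have h9 : P ≤ 2 * κ * |I| + κ * |C| := by
    calc P = κ * (2 * I + C) := key
      _ ≤ κ * (2 * |I| + |C|) := mul_le_mul_of_nonneg_left habs hκ.le
      _ = 2 * κ * |I| + κ * |C| := by ring
  have h10 : P ≤ 4 * κ * |I| + 2 * κ * (M₁ * R * vol) := by
    have h13 : κ * |C| ≤ κ * (M₁ * R * vol + 1/(2*κ) * P) := mul_le_mul_of_nonneg_left hCb hκ.le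
    have hexp : κ * (M₁ * R * vol + 1/(2*κ) * P) = κ * (M₁ * R * vol) + P / 2 := by
      field_simp
    rw [hexp] at h13
    linarith
  have h11 : 2 * |I| ≤ I ^ 2 + 1 := by nlinarith [sq_nonneg (|I| - 1), sq_abs I]
  have h12 : (1:ℝ) ≤ I ^ 2 + 1 := by nlinarith [sq_nonneg I]
  have e1 := mul_le_mul_of_nonneg_left h11 (show (0:ℝ) ≤ 2 * κ by positivity)
  have e2 := mul_le_mul_of_nonneg_left h12
    (show (0:ℝ) ≤ 2 * κ * (M₁ * R * vol) by positivity)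
  calc P ≤ 4 * κ * |I| + 2 * κ * (M₁ * R * vol) := h10
    _ ≤ 2 * κ * (I ^ 2 + 1) + 2 * κ * (M₁ * R * vol) * (I ^ 2 + 1) := by nlinarith [e1, e2]
    _ = 2 * κ * (1 + M₁ * R * vol) * (I ^ 2 + 1) := by ring
end
end

section
/- There exist constants α₀>0 and M₀>0, depending only on f, s, a₆ and χ (in particular independent of β and m), such that for every β∈(0,1], every integer m≥1, every M≥M₀, and every u∈E^{+m}⊕E^{−m}⊕N^m satisfying J_β(u)≥M and ∫_Q|u|^{s+1} dx dt ≤ 2(s+1)·𝓘_β(u), one has I_β(u) ≥ α₀·M. -/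
open MeasureTheory

noncomputable section

private lemma aux_rpow_sub_lin {x θ ε : ℝ} (hx : 0 ≤ x) (hθ0 : 0 < θ) (hθ1 : θ < 1) (hε : 0 < ε) :
    x ^ θ ≤ ε * x + ε ^ (-(θ / (1 - θ))) := by
  have h1θ : (0:ℝ) < 1 - θ := by linarith
  rcases le_or_gt x (ε ^ (-(1 / (1 - θ)))) with h | h
  · have h2 : x ^ θ ≤ (ε ^ (-(1 / (1 - θ)))) ^ θ := Real.rpow_le_rpow hx h hθ0.le
    have h3 : (ε ^ (-(1 / (1 - θ)))) ^ θ = ε ^ (-(θ / (1 - θ))) := by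
      rw [← Real.rpow_mul hε.le]
      congr 1
      field_simp
    rw [h3] at h2
    have hεx : 0 ≤ ε * x := by positivity
    linarith
  · have hx0 : 0 < x := lt_trans (Real.rpow_pos_of_pos hε _) h
    have h2 : x ^ (θ - 1) ≤ (ε ^ (-(1 / (1 - θ)))) ^ (θ - 1) :=
      Real.rpow_le_rpow_of_nonpos (Real.rpow_pos_of_pos hε _) h.le (by linarith)
    have h3 : (ε ^ (-(1 / (1 - θ)))) ^ (θ - 1) = ε := by
      rw [← Real.rpow_mul hε.le, show -(1 / (1 - θ)) * (θ - 1) = 1 by field_simp; ring, Real.rpow_one]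
    rw [h3] at h2
    have h4 : x ^ θ = x * x ^ (θ - 1) := by
      rw [show θ = 1 + (θ - 1) by ring, Real.rpow_add hx0, Real.rpow_one]
      ring_nf
    have h5 : x * x ^ (θ - 1) ≤ x * ε := mul_le_mul_of_nonneg_left h2 hx0.le
    have h6 : (0:ℝ) ≤ ε ^ (-(θ / (1 - θ))) := (Real.rpow_pos_of_pos hε _).le
    nlinarith

private lemma cont_of_mem_Wnm (e : ℕ → ℕ × ℕ × Bool) (m : ℕ) {u : ℝ × ℝ → ℝ}
    (hu : u ∈ Wnm e m m) : Continuous u := by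
  have hphiA : ∀ j k : ℕ, Continuous (phiA j k) := by
    intro j k; unfold phiA; fun_prop
  have hphiB : ∀ j k : ℕ, Continuous (phiB j k) := by
    intro j k; unfold phiB; fun_prop
  set S : Set (ℝ × ℝ → ℝ) := {g | ∃ j k : ℕ, g = phiA j k ∨ g = phiB j k} with hS
  have hle : Wnm e m m ≤ Submodule.span ℝ S := by
    unfold Wnm
    refine sup_le (sup_le (Submodule.span_mono ?_) (Submodule.span_mono ?_))
      (Submodule.span_mono ?_)
    · rintro g ⟨i, -, rfl⟩
      rcases i with ⟨j, k, b⟩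
      cases b
      · exact ⟨j, k, Or.inr (by simp [idxFun])⟩
      · exact ⟨j, k, Or.inl (by simp [idxFun])⟩
    · rintro g ⟨j, k, -, -, (rfl | rfl)⟩
      · exact ⟨j, k, Or.inl rfl⟩
      · exact ⟨j, k, Or.inr rfl⟩
    · rintro g ⟨j, -, -, (rfl | rfl)⟩
      · exact ⟨j, j, Or.inl rfl⟩
      · exact ⟨j, j, Or.inr rfl⟩
  have hu2 : u ∈ Submodule.span ℝ S := hle hu
  clear hu hle
  induction hu2 using Submodule.span_induction with
  | mem g hg =>
    obtain ⟨j, k, (rfl | rfl)⟩ := hg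
    · exact hphiA j k
    · exact hphiB j k
  | zero => exact continuous_const
  | add x y _ _ hx hy => exact hx.add hy
  | smul a x _ hx => exact hx.const_smul a

private lemma chi_bounds {χ : ℝ → ℝ} (hχ : chiAdmissible χ) : ∀ t : ℝ, 0 ≤ χ t ∧ χ t ≤ 1 := by
  obtain ⟨hsm, h1, h2, hd⟩ := hχ
  have hcont : Continuous χ := hsm.continuous
  have hanti : StrictAntiOn χ (Set.Icc 1 2) :=
    strictAntiOn_of_deriv_neg (convex_Icc 1 2) hcont.continuousOn
      (by rw [interior_Icc]; exact fun x hx => (hd x hx.1 hx.2).2)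
  intro t
  rcases le_or_gt t 1 with h | h
  · rw [h1 t h]; norm_num
  rcases le_or_gt 2 t with h' | h'
  · rw [h2 t h']; norm_num
  have hm : t ∈ Set.Icc (1:ℝ) 2 := ⟨h.le, h'.le⟩
  have ha := hanti (Set.mem_Icc.mpr ⟨le_refl 1, one_le_two⟩) hm h
  have hb := hanti hm (Set.mem_Icc.mpr ⟨one_le_two, le_refl 2⟩) h'
  rw [h1 1 le_rfl] at ha
  rw [h2 2 le_rfl] at hb
  exact ⟨hb.le, ha.le⟩

set_option maxHeartbeats 1000000 in
/-- on the support of `ψ`, `J_β(u) ≥ M ≥ M₀` forces `I_β(u) ≥ α₀·M`,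
uniformly in `β ∈ (0,1]` and `m`. -/
theorem statement7 (s : ℝ) (hs : 1 < s) (f : ℝ × ℝ → ℝ) (hf : fAdmissible f)
    (e : ℕ → ℕ × ℕ × Bool) (he : IsEnum e) (a6 : ℝ) (ha6 : 0 < a6)
    (χ : ℝ → ℝ) (hχ : chiAdmissible χ) :
    ∃ α0 M0 : ℝ, 0 < α0 ∧ 0 < M0 ∧ ∀ β ∈ Set.Ioc (0 : ℝ) 1, ∀ m : ℕ, 1 ≤ m →
      ∀ M : ℝ, M0 ≤ M → ∀ u ∈ Wnm e m m,
        M ≤ Jbeta s f a6 χ β u →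
        intPow (s + 1) u ≤ 2 * (s + 1) * calI s f a6 β u →
        α0 * M ≤ Ibeta s f β u := by
  have hχ01 := chi_bounds hχ
  have hfc : Continuous f := hf.1.continuous
  set K : Set (ℝ × ℝ) := Set.Icc 0 Real.pi ×ˢ Set.Icc 0 (2 * Real.pi) with hK
  have hKc : IsCompact K := isCompact_Icc.prod isCompact_Icc
  have hQK : Qset ⊆ K := Set.prod_mono Set.Ioo_subset_Icc_self Set.Ioo_subset_Icc_self
  have hQm : MeasurableSet Qset := measurableSet_Ioo.prod measurableSet_Ioo
  obtain ⟨C0, hC0⟩ := hKc.exists_bound_of_continuousOn hfc.continuousOn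
  set Cf := max C0 0 with hCf
  have hCf0 : 0 ≤ Cf := le_max_right _ _
  have hCfb : ∀ p ∈ Qset, |f p| ≤ Cf := fun p hp =>
    le_trans (hC0 p (hQK hp)) (le_max_left _ _)
  set V := (volume Qset).toReal with hV
  have hV0 : 0 ≤ V := ENNReal.toReal_nonneg
  have hQfin : volume Qset < ⊤ := lt_of_le_of_lt (measure_mono hQK) hKc.measure_lt_top
  have hs1 : (0:ℝ) < s + 1 := by linarith
  have hs0 : (0:ℝ) < s := by linarith
  set θ := 2 / (s + 1) with hθ
  have hθ0 : 0 < θ := by positivity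
  have hθ1 : θ < 1 := by rw [hθ, div_lt_one hs1]; linarith
  set C1 := 4 * a6 * (s + 1) + 1 with hC1
  have hC1one : 1 ≤ C1 := by nlinarith
  set A := (Cf + 1) * (1 + V) * C1 with hA
  have hA1 : 1 ≤ A := by
    have h : 1 ≤ (Cf + 1) * (1 + V) := by nlinarith
    nlinarith
  have hA0 : 0 < A := by linarith
  set εA := 1 / (4 * A) with hεA
  have hεA0 : 0 < εA := by positivity
  set B := A * εA ^ (-(θ / (1 - θ))) with hB
  have hB0 : 0 < B := by
    have := Real.rpow_pos_of_pos hεA0 (-(θ / (1 - θ)))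
    positivity
  refine ⟨2/5, 4 * (B + 1), by norm_num, by linarith, ?_⟩
  rintro β hβ m hm M hM u hu hJ hsupp
  obtain ⟨I, hI⟩ : ∃ I, Ibeta s f β u = I := ⟨_, rfl⟩
  rw [hI]
  have hucont : Continuous u := cont_of_mem_Wnm e m hu
  have hint : ∀ g : ℝ × ℝ → ℝ, Continuous g → IntegrableOn g Qset :=
    fun g hg => (hg.continuousOn.integrableOn_compact hKc).mono_set hQK
  have hIntAbsU : IntegrableOn (fun p => |u p|) Qset := hint _ hucont.abs
  have hIntPow : IntegrableOn (fun p => |u p| ^ (s + 1)) Qset :=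
    hint _ (hucont.abs.rpow_const (fun p => Or.inr hs1.le))
  have hIntFU : IntegrableOn (fun p => f p * u p) Qset := hint _ (hfc.mul hucont)
  obtain ⟨P, hP⟩ : ∃ P, intPow (s + 1) u = P := ⟨_, rfl⟩
  have hP0 : 0 ≤ P := by
    rw [← hP]
    exact setIntegral_nonneg hQm (fun p _ => Real.rpow_nonneg (abs_nonneg _) _)
  have hP1pos : (0:ℝ) < P + 1 := by linarith
  obtain ⟨T, hT⟩ : ∃ T, (∫ p in Qset, |u p|) = T := ⟨_, rfl⟩
  -- Step 1 : |∫ f u| ≤ Cf * T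
  have step1 : |intFU f u| ≤ Cf * T := by
    have e1 : |intFU f u| ≤ ∫ p in Qset, |f p * u p| := by
      unfold intFU
      simpa only [Real.norm_eq_abs] using
        norm_integral_le_integral_norm (μ := volume.restrict Qset) (fun p => f p * u p)
    have e2 : (∫ p in Qset, |f p * u p|) ≤ ∫ p in Qset, Cf * |u p| := by
      refine setIntegral_mono_on (hint _ (hfc.mul hucont).abs)
        (hIntAbsU.const_mul Cf) hQm ?_
      intro p hp
      rw [abs_mul]
      exact mul_le_mul_of_nonneg_right (hCfb p hp) (abs_nonneg _)
    have e3 : (∫ p in Qset, Cf * |u p|) = Cf * T := by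
      rw [integral_const_mul, hT]
    linarith
  -- Step 2 : T ≤ (1 + V) * Z,  Z = (P+1)^(1/(s+1))
  set Z := (P + 1) ^ ((1:ℝ) / (s + 1)) with hZ
  have hZ0 : 0 < Z := Real.rpow_pos_of_pos hP1pos _
  set ε1 := (P + 1) ^ (-(s / (s + 1))) with hε1
  have hε10 : 0 < ε1 := Real.rpow_pos_of_pos hP1pos _
  have step2 : T ≤ (1 + V) * Z := by
    have hpt : ∀ p : ℝ × ℝ, |u p| ≤ ε1 * |u p| ^ (s + 1) + ε1 ^ (-(1 / s)) := by
      intro p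
      have hkey := aux_rpow_sub_lin (x := |u p| ^ (s + 1)) (θ := 1 / (s + 1)) (ε := ε1)
        (Real.rpow_nonneg (abs_nonneg _) _) (by positivity)
        (by rw [div_lt_one hs1]; linarith) hε10
      have h1 : (|u p| ^ (s + 1)) ^ ((1:ℝ) / (s + 1)) = |u p| := by
        rw [← Real.rpow_mul (abs_nonneg _), mul_one_div, div_self hs1.ne', Real.rpow_one]
      have h2 : (1 / (s + 1)) / (1 - 1 / (s + 1)) = 1 / s := by
        have hsne : s + 1 ≠ 0 := hs1.ne'
        have hs0ne : s ≠ 0 := hs0.ne'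
        field_simp
        rw [add_sub_cancel_right, div_self hs0ne]
      rw [h1, h2] at hkey
      exact hkey
    have hIntC : IntegrableOn (fun _ : ℝ × ℝ => ε1 ^ (-(1 / s))) Qset :=
      integrableOn_const hQfin.ne
    have hTle : T ≤ ε1 * P + ε1 ^ (-(1 / s)) * V := by
      have e4 : T ≤ ∫ p in Qset, (ε1 * |u p| ^ (s + 1) + ε1 ^ (-(1 / s))) := by
        rw [← hT]
        exact setIntegral_mono_on hIntAbsU ((hIntPow.const_mul ε1).add hIntC) hQm
          (fun p _ => hpt p)
      have e5 : (∫ p in Qset, (ε1 * |u p| ^ (s + 1) + ε1 ^ (-(1 / s))))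
          = ε1 * P + ε1 ^ (-(1 / s)) * V := by
        rw [integral_add (hIntPow.const_mul ε1) hIntC, integral_const_mul,
          setIntegral_const, ← hP]
        unfold intPow
        rw [smul_eq_mul, hV, measureReal_def]
        ring
      linarith
    have hε1P : ε1 * (P + 1) = Z := by
      rw [hε1, hZ, show (1:ℝ) / (s + 1) = -(s / (s + 1)) + 1 by field_simp; ring,
        Real.rpow_add hP1pos, Real.rpow_one]
    have hε1c : ε1 ^ (-(1 / s)) = Z := by
      rw [hε1, hZ, ← Real.rpow_mul hP1pos.le]
      congr 1
      have hsne : s + 1 ≠ 0 := hs1.ne'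
      have hs0ne : s ≠ 0 := hs0.ne'
      field_simp
    rw [hε1c] at hTle
    have h8 : ε1 * P = Z - ε1 := by rw [← hε1P]; ring
    nlinarith [hε10]
  -- Step 3 : Z ≤ C1 * D,  D = (|I|+1)^θ
  set D := (|I| + 1) ^ θ with hD
  have habs0 : (0:ℝ) ≤ |I| := abs_nonneg I
  have habs1 : (1:ℝ) ≤ |I| + 1 := by linarith
  have hD1 : 1 ≤ D := by
    calc (1:ℝ) = 1 ^ θ := (Real.one_rpow θ).symm
      _ ≤ D := Real.rpow_le_rpow zero_le_one habs1 hθ0.le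
  have step3 : Z ≤ C1 * D := by
    rw [hP] at hsupp
    simp only [calI, hI] at hsupp
    have hP1 : P + 1 ≤ C1 * (I ^ 2 + 1) := by nlinarith [sq_nonneg I]
    have h1 : Z ≤ (C1 * (I ^ 2 + 1)) ^ ((1:ℝ) / (s + 1)) :=
      Real.rpow_le_rpow (by linarith) hP1 (by positivity)
    have h2 : (C1 * (I ^ 2 + 1)) ^ ((1:ℝ) / (s + 1))
        = C1 ^ ((1:ℝ) / (s + 1)) * (I ^ 2 + 1) ^ ((1:ℝ) / (s + 1)) :=
      Real.mul_rpow (by linarith) (by positivity)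
    have h3 : C1 ^ ((1:ℝ) / (s + 1)) ≤ C1 := by
      calc C1 ^ ((1:ℝ) / (s + 1)) ≤ C1 ^ (1:ℝ) :=
            Real.rpow_le_rpow_of_exponent_le hC1one (by rw [div_le_one hs1]; linarith)
        _ = C1 := Real.rpow_one _
    have h4 : (I ^ 2 + 1) ^ ((1:ℝ) / (s + 1)) ≤ D := by
      have h5 : I ^ 2 + 1 ≤ (|I| + 1) ^ 2 := by nlinarith [sq_abs I]
      calc (I ^ 2 + 1) ^ ((1:ℝ) / (s + 1))
          ≤ ((|I| + 1) ^ 2) ^ ((1:ℝ) / (s + 1)) :=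
            Real.rpow_le_rpow (by positivity) h5 (by positivity)
        _ = (|I| + 1) ^ θ := by
            rw [← Real.rpow_natCast (|I| + 1) 2, ← Real.rpow_mul (by positivity)]
            congr 1
            rw [hθ]
            push_cast
            ring
        _ = D := rfl
    have h6 : (0:ℝ) < C1 ^ ((1:ℝ) / (s + 1)) := Real.rpow_pos_of_pos (by linarith) _
    have h7 : (0:ℝ) < (I ^ 2 + 1) ^ ((1:ℝ) / (s + 1)) := Real.rpow_pos_of_pos (by positivity) _
    nlinarith
  -- Step 4 : |∫ f u| ≤ A * D
  have step4 : |intFU f u| ≤ A * D := by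
    have h1 : Cf * T ≤ Cf * ((1 + V) * Z) := mul_le_mul_of_nonneg_left step2 hCf0
    have h2 : (1 + V) * Z ≤ (1 + V) * (C1 * D) :=
      mul_le_mul_of_nonneg_left step3 (by linarith)
    have h3 : Cf * ((1 + V) * (C1 * D)) ≤ A * D := by
      rw [hA]
      nlinarith [mul_nonneg (mul_nonneg (by linarith : (0:ℝ) ≤ 1 + V)
        (by linarith : (0:ℝ) ≤ C1)) (by linarith : (0:ℝ) ≤ D)]
    have h4 : Cf * ((1 + V) * Z) ≤ Cf * ((1 + V) * (C1 * D)) :=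
      mul_le_mul_of_nonneg_left h2 hCf0
    linarith
  -- Step 5 : A * D ≤ (|I|+1)/4 + B
  have step5 : A * D ≤ (|I| + 1) / 4 + B := by
    have hkey := aux_rpow_sub_lin (x := |I| + 1) (θ := θ) (by positivity) hθ0 hθ1 hεA0
    have h6 : A * (εA * (|I| + 1) + εA ^ (-(θ / (1 - θ)))) = (|I| + 1) / 4 + B := by
      have hAe : A * εA = 1 / 4 := by rw [hεA]; field_simp
      rw [mul_add, ← mul_assoc, hAe, hB]
      ring
    have := mul_le_mul_of_nonneg_left hkey hA0.le
    linarith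
  -- Step 6 : M ≤ I + (|I|+1)/4 + B
  have hψ : 0 ≤ psiCut s f a6 χ β u ∧ psiCut s f a6 χ β u ≤ 1 := hχ01 _
  have hJI : Jbeta s f a6 χ β u = I + (1 - psiCut s f a6 χ β u) * intFU f u := by
    rw [← hI]
    unfold Jbeta Ibeta
    ring
  have h7 : (1 - psiCut s f a6 χ β u) * intFU f u ≤ |intFU f u| := by
    calc (1 - psiCut s f a6 χ β u) * intFU f u
        ≤ |(1 - psiCut s f a6 χ β u) * intFU f u| := le_abs_self _
      _ = |1 - psiCut s f a6 χ β u| * |intFU f u| := abs_mul _ _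
      _ ≤ 1 * |intFU f u| := by
          refine mul_le_mul_of_nonneg_right ?_ (abs_nonneg _)
          rw [abs_le]
          constructor <;> [linarith [hψ.2]; linarith [hψ.1]]
      _ = |intFU f u| := one_mul _
  have hfinal : M ≤ I + ((|I| + 1) / 4 + B) := by
    rw [hJI] at hJ
    linarith
  rcases abs_cases I with ⟨ha, hb⟩ | ⟨ha, hb⟩ <;> rw [ha] at hfinal <;> linarith
end
end

section
/- Let s>1 be a real number, β≥0, and let f:[0,π]×ℝ→ℝ be continuous and 2π-periodic in t. Suppose p∈C²(ℝ) is 2π-periodic, w∈C²([0,π]×ℝ) is 2π-periodic in t with w(0,t)=w(π,t)=0 for all t, and, setting v(x,t)=p(t+x)−p(t−x) and u=v+w, the equation w_tt(x,t)−w_xx(x,t) = −|u(x,t)|^{s−1}u(x,t)+β·v_tt(x,t)+f(x,t) holds for all (x,t)∈[0,π]×ℝ. Then for every r∈ℝ: 2π·β·p″(r) = ∫₀^π [ (|u|^{s−1}u − f)(x,r−x) − (|u|^{s−1}u − f)(x,r+x) ] dx. -/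
open MeasureTheory

noncomputable section

/-- Partial derivative in the first (space) variable. -/
def pdx (u : ℝ × ℝ → ℝ) (p : ℝ × ℝ) : ℝ := deriv (fun x => u (x, p.2)) p.1

/-- Partial derivative in the second (time) variable. -/
def pdt (u : ℝ × ℝ → ℝ) (p : ℝ × ℝ) : ℝ := deriv (fun t => u (p.1, t)) p.2

/-- testing the modified equation against kernel elements yields the
identity `2πβ p''(r) = ∫₀^π [(|u|^{s-1}u - f)(x, r-x) - (|u|^{s-1}u - f)(x, r+x)] dx`
for all `r`. -/
theorem statement19 (s : ℝ) (hs : 1 < s) (β : ℝ) (hβ : 0 ≤ β)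
    (f : ℝ × ℝ → ℝ) (hf : Continuous f)
    (hfper : ∀ x t : ℝ, f (x, t + 2 * Real.pi) = f (x, t))
    (p : ℝ → ℝ) (hp : ContDiff ℝ 2 p) (hpper : Function.Periodic p (2 * Real.pi))
    (w : ℝ × ℝ → ℝ) (hw : ContDiff ℝ 2 w)
    (hwper : ∀ x t : ℝ, w (x, t + 2 * Real.pi) = w (x, t))
    (hwbc : ∀ t : ℝ, w (0, t) = 0 ∧ w (Real.pi, t) = 0)
    (u : ℝ × ℝ → ℝ)
    (hu : ∀ q : ℝ × ℝ, u q = p (q.2 + q.1) - p (q.2 - q.1) + w q)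
    (heq : ∀ x ∈ Set.Icc (0 : ℝ) Real.pi, ∀ t : ℝ,
      pdt (pdt w) (x, t) - pdx (pdx w) (x, t) =
        -(|u (x, t)| ^ (s - 1) * u (x, t))
          + β * (deriv (deriv p) (t + x) - deriv (deriv p) (t - x)) + f (x, t)) :
    ∀ r : ℝ, 2 * Real.pi * β * deriv (deriv p) r =
      ∫ x in (0 : ℝ)..Real.pi,
        ((|u (x, r - x)| ^ (s - 1) * u (x, r - x) - f (x, r - x))
          - (|u (x, r + x)| ^ (s - 1) * u (x, r + x) - f (x, r + x))) := by
  intro r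
  -- basic differentiability facts for `p`
  have hp1 : ContDiff ℝ (1 + 1 : WithTop ℕ∞) p := by norm_num; exact hp
  have hp' : ContDiff ℝ 1 (deriv p) := (contDiff_succ_iff_deriv.mp hp1).2.2
  have hp'0 : ContDiff ℝ (0 + 1 : WithTop ℕ∞) (deriv p) := by norm_num; exact hp'
  have hp'd : Differentiable ℝ (deriv p) := hp'.differentiable one_ne_zero
  have hp''c : Continuous (deriv (deriv p)) := (contDiff_succ_iff_deriv.mp hp'0).2.2.continuous
  have hp'per : ∀ x : ℝ, deriv p (x + 2 * Real.pi) = deriv p x := by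
    intro x
    have : (fun y => p (y + 2 * Real.pi)) = p := funext fun y => hpper y
    rw [← deriv_comp_add_const p (2 * Real.pi) x, this]
  -- basic differentiability facts for `w`
  set D : ℝ × ℝ → (ℝ × ℝ) →L[ℝ] ℝ := fderiv ℝ w with hDdef
  have hw1 : ContDiff ℝ (1 + 1 : WithTop ℕ∞) w := by norm_num; exact hw
  have hwd : Differentiable ℝ w := hw.differentiable (by norm_num)
  have hD1 : ContDiff ℝ 1 D := (contDiff_succ_iff_fderiv.mp hw1).2.2
  have hD0 : ContDiff ℝ (0 + 1 : WithTop ℕ∞) D := by norm_num; exact hD1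
  have hDd : Differentiable ℝ D := hD1.differentiable one_ne_zero
  set D2 : ℝ × ℝ → (ℝ × ℝ) →L[ℝ] (ℝ × ℝ) →L[ℝ] ℝ := fderiv ℝ D with hD2def
  have hD2c : Continuous D2 := (contDiff_succ_iff_fderiv.mp hD0).2.2.continuous
  -- symmetry of second derivative
  have hsymm : ∀ q a b : ℝ × ℝ, D2 q a b = D2 q b a := fun q =>
    second_derivative_symmetric (fun y => (hwd y).hasFDerivAt) (hDd q).hasFDerivAt
  -- derivative of w along a curve
  have hderw : ∀ (γ : ℝ → ℝ × ℝ) (d : ℝ × ℝ) (x : ℝ), HasDerivAt γ d x →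
      HasDerivAt (fun y => w (γ y)) (D (γ x) d) x := by
    intro γ d x hγ
    exact (hwd (γ x)).hasFDerivAt.comp_hasDerivAt x hγ
  -- derivative of (D · b) along a curve
  have hderD : ∀ (γ : ℝ → ℝ × ℝ) (d : ℝ × ℝ) (b : ℝ × ℝ) (x : ℝ), HasDerivAt γ d x →
      HasDerivAt (fun y => D (γ y) b) (D2 (γ x) d b) x := by
    intro γ d b x hγ
    have h1 : HasFDerivAt (fun q => D q b)
        ((ContinuousLinearMap.apply ℝ ℝ b).comp (D2 (γ x))) (γ x) :=
      (ContinuousLinearMap.apply ℝ ℝ b).hasFDerivAt.comp (γ x) (hDd (γ x)).hasFDerivAt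
    have := h1.comp_hasDerivAt x hγ
    exact this
  -- identification of pdt/pdx with directional derivatives
  have hpdt : ∀ q : ℝ × ℝ, pdt w q = D q (0, 1) := by
    intro q
    have hc : HasDerivAt (fun t : ℝ => (q.1, t)) ((0 : ℝ), (1 : ℝ)) q.2 :=
      HasDerivAt.prodMk (hasDerivAt_const _ _) (hasDerivAt_id _)
    exact (hderw _ _ _ hc).deriv
  have hpdx : ∀ q : ℝ × ℝ, pdx w q = D q (1, 0) := by
    intro q
    have hc : HasDerivAt (fun x : ℝ => (x, q.2)) ((1 : ℝ), (0 : ℝ)) q.1 :=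
      HasDerivAt.prodMk (hasDerivAt_id _) (hasDerivAt_const _ _)
    exact (hderw _ _ _ hc).deriv
  have hpdtt : ∀ q : ℝ × ℝ, pdt (pdt w) q = D2 q (0, 1) (0, 1) := by
    intro q
    have hfun : (fun t => pdt w (q.1, t)) = fun t => D (q.1, t) (0, 1) :=
      funext fun t => hpdt (q.1, t)
    have hc : HasDerivAt (fun t : ℝ => (q.1, t)) ((0 : ℝ), (1 : ℝ)) q.2 :=
      HasDerivAt.prodMk (hasDerivAt_const _ _) (hasDerivAt_id _)
    show deriv (fun t => pdt w (q.1, t)) q.2 = _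
    rw [hfun]
    exact (hderD _ _ _ _ hc).deriv
  have hpdxx : ∀ q : ℝ × ℝ, pdx (pdx w) q = D2 q (1, 0) (1, 0) := by
    intro q
    have hfun : (fun x => pdx w (x, q.2)) = fun x => D (x, q.2) (1, 0) :=
      funext fun x => hpdx (x, q.2)
    have hc : HasDerivAt (fun x : ℝ => (x, q.2)) ((1 : ℝ), (0 : ℝ)) q.1 :=
      HasDerivAt.prodMk (hasDerivAt_id _) (hasDerivAt_const _ _)
    show deriv (fun x => pdx w (x, q.2)) q.1 = _
    rw [hfun]
    exact (hderD _ _ _ _ hc).deriv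
  -- vector decompositions
  have hv1 : ((1 : ℝ), (1 : ℝ)) = ((1 : ℝ), (0 : ℝ)) + ((0 : ℝ), (1 : ℝ)) := by
    simp [Prod.ext_iff]
  have hv2 : ((-1 : ℝ), (1 : ℝ)) = ((0 : ℝ), (1 : ℝ)) - ((1 : ℝ), (0 : ℝ)) := by
    simp [Prod.ext_iff]
  have hv3 : ((1 : ℝ), (-1 : ℝ)) = ((1 : ℝ), (0 : ℝ)) - ((0 : ℝ), (1 : ℝ)) := by
    simp [Prod.ext_iff]
  -- expansion of the second derivative terms
  have hexp1 : ∀ q : ℝ × ℝ, D2 q (1, -1) (1, 1) = D2 q (1, 0) (1, 0) - D2 q (0, 1) (0, 1) := by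
    intro q
    rw [hv3, hv1, map_sub]
    simp only [ContinuousLinearMap.sub_apply, map_add, ContinuousLinearMap.add_apply]
    rw [hsymm q (0, 1) (1, 0)]
    ring
  have hexp2 : ∀ q : ℝ × ℝ, D2 q (1, 1) (-1, 1) = D2 q (0, 1) (0, 1) - D2 q (1, 0) (1, 0) := by
    intro q
    rw [hv2, hv1, map_add]
    simp only [ContinuousLinearMap.add_apply, map_sub, ContinuousLinearMap.sub_apply]
    rw [hsymm q (0, 1) (1, 0)]
    ring
  -- the combined function along characteristics and its derivative
  set AB : ℝ → ℝ := fun y => D (y, r - y) (1, 1) + D (y, r + y) (-1, 1) with hABdef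
  have hABder : ∀ x : ℝ, HasDerivAt AB
      (D2 (x, r - x) (1, -1) (1, 1) + D2 (x, r + x) (1, 1) (-1, 1)) x := by
    intro x
    have hc1 : HasDerivAt (fun y : ℝ => (y, r - y)) ((1 : ℝ), (-1 : ℝ)) x := by
      have := HasDerivAt.prodMk (hasDerivAt_id x) (HasDerivAt.sub (hasDerivAt_const x r) (hasDerivAt_id x))
      simpa using this
    have hc2 : HasDerivAt (fun y : ℝ => (y, r + y)) ((1 : ℝ), (1 : ℝ)) x := by
      have := HasDerivAt.prodMk (hasDerivAt_id x) (HasDerivAt.add (hasDerivAt_const x r) (hasDerivAt_id x))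
      simpa using this
    exact (hderD _ _ _ _ hc1).add (hderD _ _ _ _ hc2)
  -- continuity of the derivative of AB
  have hDcont : Continuous D := hD1.continuous
  have hABder_cont : Continuous fun x =>
      D2 (x, r - x) (1, -1) (1, 1) + D2 (x, r + x) (1, 1) (-1, 1) := by
    have c1 : Continuous fun x : ℝ => (x, r - x) :=
      continuous_id.prodMk (continuous_const.sub continuous_id)
    have c2 : Continuous fun x : ℝ => (x, r + x) :=
      continuous_id.prodMk (continuous_const.add continuous_id)
    exact (((hD2c.comp c1).clm_apply continuous_const).clm_apply continuous_const).add
      (((hD2c.comp c2).clm_apply continuous_const).clm_apply continuous_const)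
  -- FTC for AB
  have hFTC : (∫ x in (0 : ℝ)..Real.pi,
      (D2 (x, r - x) (1, -1) (1, 1) + D2 (x, r + x) (1, 1) (-1, 1))) = AB Real.pi - AB 0 :=
    intervalIntegral.integral_eq_sub_of_hasDerivAt (fun x _ => hABder x)
      (hABder_cont.intervalIntegrable _ _)
  -- boundary values vanish
  have hbt0 : D (0, r) (0, 1) = 0 := by
    rw [← hpdt (0, r)]
    show deriv (fun t => w (0, t)) r = 0
    have : (fun t : ℝ => w (0, t)) = fun _ => (0 : ℝ) := funext fun t => (hwbc t).1
    rw [this, deriv_const]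
  have hbtπ : ∀ t : ℝ, D (Real.pi, t) (0, 1) = 0 := by
    intro t
    rw [← hpdt (Real.pi, t)]
    show deriv (fun t' => w (Real.pi, t')) t = 0
    have : (fun t' : ℝ => w (Real.pi, t')) = fun _ => (0 : ℝ) := funext fun t' => (hwbc t').2
    rw [this, deriv_const]
  have hbxπ : D (Real.pi, r - Real.pi) (1, 0) = D (Real.pi, r + Real.pi) (1, 0) := by
    rw [← hpdx (Real.pi, r - Real.pi), ← hpdx (Real.pi, r + Real.pi)]
    show deriv (fun x => w (x, r - Real.pi)) Real.pi = deriv (fun x => w (x, r + Real.pi)) Real.pi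
    have : (fun x => w (x, r + Real.pi)) = (fun x => w (x, r - Real.pi)) := by
      funext x
      have := hwper x (r - Real.pi)
      rw [show r - Real.pi + 2 * Real.pi = r + Real.pi by ring] at this
      exact this
    rw [this]
  have hAB0 : AB 0 = 0 := by
    show D (0, r - 0) (1, 1) + D (0, r + 0) (-1, 1) = 0
    rw [sub_zero, add_zero, hv1, hv2, map_add, map_sub, hbt0]
    ring
  have hABπ : AB Real.pi = 0 := by
    show D (Real.pi, r - Real.pi) (1, 1) + D (Real.pi, r + Real.pi) (-1, 1) = 0
    rw [hv1, hv2, map_add, map_sub, hbtπ, hbtπ, hbxπ]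
    ring
  -- pointwise identity for the integrand
  set g : ℝ × ℝ → ℝ := fun q => |u q| ^ (s - 1) * u q - f q with hgdef
  have hpoint : ∀ x ∈ Set.uIcc (0 : ℝ) Real.pi,
      g (x, r - x) - g (x, r + x) =
        (D2 (x, r - x) (1, -1) (1, 1) + D2 (x, r + x) (1, 1) (-1, 1))
          + 2 * β * deriv (deriv p) r
          - β * deriv (deriv p) (r - 2 * x) - β * deriv (deriv p) (r + 2 * x) := by
    intro x hx
    rw [Set.uIcc_of_le Real.pi_pos.le] at hx
    have h1 := heq x hx (r - x)
    have h2 := heq x hx (r + x)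
    rw [hpdtt, hpdxx] at h1 h2
    rw [show r - x + x = r by ring, show r - x - x = r - 2 * x by ring] at h1
    rw [show r + x + x = r + 2 * x by ring, show r + x - x = r by ring] at h2
    rw [hexp1, hexp2]
    simp only [hgdef]
    linarith [h1, h2]
  -- integrals of the p'' terms vanish by periodicity
  have hI1 : (∫ x in (0 : ℝ)..Real.pi, deriv (deriv p) (r + 2 * x)) = 0 := by
    have hder : ∀ x ∈ Set.uIcc (0 : ℝ) Real.pi,
        HasDerivAt (fun y => deriv p (r + 2 * y) / 2) (deriv (deriv p) (r + 2 * x)) x := by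
      intro x _
      have hin : HasDerivAt (fun y : ℝ => r + 2 * y) 2 x := by
        simpa using HasDerivAt.const_add r (HasDerivAt.const_mul (2:ℝ) (hasDerivAt_id' x))
      have hout := (hp'd (r + 2 * x)).hasDerivAt
      have := (hout.comp x hin).div_const 2
      simpa [mul_div_assoc] using this
    have hint : IntervalIntegrable (fun x => deriv (deriv p) (r + 2 * x)) volume 0 Real.pi :=
      (hp''c.comp (continuous_const.add (continuous_const.mul continuous_id))).intervalIntegrable _ _
    rw [intervalIntegral.integral_eq_sub_of_hasDerivAt hder hint]
    rw [show r + 2 * Real.pi = r + 2 * Real.pi from rfl]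
    rw [hp'per r]
    simp
  have hI2 : (∫ x in (0 : ℝ)..Real.pi, deriv (deriv p) (r - 2 * x)) = 0 := by
    have hder : ∀ x ∈ Set.uIcc (0 : ℝ) Real.pi,
        HasDerivAt (fun y => -(deriv p (r - 2 * y)) / 2) (deriv (deriv p) (r - 2 * x)) x := by
      intro x _
      have hin : HasDerivAt (fun y : ℝ => r - 2 * y) (-2) x := by
        simpa using HasDerivAt.const_sub r (HasDerivAt.const_mul (2:ℝ) (hasDerivAt_id' x))
      have hout := (hp'd (r - 2 * x)).hasDerivAt
      have := ((hout.comp x hin).neg).div_const 2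
      have heqd : -(deriv (deriv p) (r - 2 * x) * -2) / 2 = deriv (deriv p) (r - 2 * x) := by ring
      rw [heqd] at this
      exact this
    have hint : IntervalIntegrable (fun x => deriv (deriv p) (r - 2 * x)) volume 0 Real.pi :=
      (hp''c.comp (continuous_const.sub (continuous_const.mul continuous_id))).intervalIntegrable _ _
    rw [intervalIntegral.integral_eq_sub_of_hasDerivAt hder hint]
    have : deriv p (r - 2 * Real.pi) = deriv p r := by
      have := hp'per (r - 2 * Real.pi)
      rw [show r - 2 * Real.pi + 2 * Real.pi = r by ring] at this
      exact this.symm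
    rw [this]
    ring
  -- continuity of g and the integrand
  have hucont : Continuous u := by
    have : u = fun q : ℝ × ℝ => p (q.2 + q.1) - p (q.2 - q.1) + w q := funext hu
    rw [this]
    exact ((hp.continuous.comp (continuous_snd.add continuous_fst)).sub
      (hp.continuous.comp (continuous_snd.sub continuous_fst))).add hw.continuous
  have hgc : Continuous g := by
    have habs : Continuous fun q : ℝ × ℝ => |u q| ^ (s - 1) := by
      rw [continuous_iff_continuousAt]
      intro q
      exact (Real.continuousAt_rpow_const _ _ (Or.inr (by linarith))).comp
        hucont.abs.continuousAt
    exact (habs.mul hucont).sub hf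
  have c1 : Continuous fun x : ℝ => (x, r - x) :=
    continuous_id.prodMk (continuous_const.sub continuous_id)
  have c2 : Continuous fun x : ℝ => (x, r + x) :=
    continuous_id.prodMk (continuous_const.add continuous_id)
  -- final computation
  have hmain : (∫ x in (0 : ℝ)..Real.pi, (g (x, r - x) - g (x, r + x))) =
      2 * Real.pi * β * deriv (deriv p) r := by
    rw [intervalIntegral.integral_congr hpoint]
    have i1 : IntervalIntegrable (fun x =>
        D2 (x, r - x) (1, -1) (1, 1) + D2 (x, r + x) (1, 1) (-1, 1)) volume 0 Real.pi :=
      hABder_cont.intervalIntegrable _ _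
    have i2 : IntervalIntegrable (fun _ : ℝ => 2 * β * deriv (deriv p) r) volume 0 Real.pi :=
      intervalIntegrable_const
    have i3 : IntervalIntegrable (fun x => β * deriv (deriv p) (r - 2 * x)) volume 0 Real.pi :=
      (continuous_const.mul (hp''c.comp
        (continuous_const.sub (continuous_const.mul continuous_id)))).intervalIntegrable _ _
    have i4 : IntervalIntegrable (fun x => β * deriv (deriv p) (r + 2 * x)) volume 0 Real.pi :=
      (continuous_const.mul (hp''c.comp
        (continuous_const.add (continuous_const.mul continuous_id)))).intervalIntegrable _ _
    rw [intervalIntegral.integral_sub ((i1.add i2).sub i3) i4,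
        intervalIntegral.integral_sub (i1.add i2) i3,
        intervalIntegral.integral_add i1 i2,
        hFTC, hAB0, hABπ,
        intervalIntegral.integral_const,
        intervalIntegral.integral_const_mul, intervalIntegral.integral_const_mul,
        hI1, hI2]
    simp
    ring_nf
  rw [← hmain]
end
end
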